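/- Let σ be the unique R-algebra automorphism of H with σ(T_0) = εT_0 and σ(T_i) = T_i for 1 ≤ i ≤ n−1. Then for 1 ≤ b ≤ n and 1 ≤ s ≤ t ≤ p one has σ(L^(s,t)_{1,b}) = ε^{bd(t−s+1)} L^(s−1,t−1)_{1,b} (superscripts read mod p). Consequently, for any composition b = (b_1, …, b_p) of n into p non-negative parts, σ(v_b) = ε^{−nd} v_b^(−1), and σ(Y_t) = ε^{−d b_t} L^(t, t+p−2)_{1, b_t} T_{b_t, n−b_t} for 1 ≤ t ≤ p (superscripts read mod p). -/

import Mathlib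

noncomputable section

namespace AK

/-- The generator `T_i` inside the free algebra on `n` generators
(defined as `0` for the never-used out-of-range indices). -/
def gen (R : Type*) [CommRing R] (n : ℕ) (i : ℕ) : FreeAlgebra R (Fin n) :=
  if h : i < n then FreeAlgebra.ι R (⟨i, h⟩ : Fin n) else 0

/-- The defining relations of the Ariki–Koike algebra `H_{r,n}` with `r = p * d` and
cyclotomic parameters `(ε Q_1, …, ε Q_d, ε² Q_1, …, ε^p Q_d)`:
`∏_{t=1}^{p} ∏_{i=1}^{d} (T_0 - ε^t Q_i) = 0`; `(T_i - q)(T_i + 1) = 0` for `1 ≤ i ≤ n-1`;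
`T_0T_1T_0T_1 = T_1T_0T_1T_0`; `T_{i+1}T_iT_{i+1} = T_iT_{i+1}T_i` for `1 ≤ i ≤ n-2`; and
`T_iT_j = T_jT_i` for `0 ≤ i < j-1 ≤ n-2`. -/
inductive Rel (R : Type*) [CommRing R] (n p d : ℕ) (ε q : R) (Q : Fin d → R) :
    FreeAlgebra R (Fin n) → FreeAlgebra R (Fin n) → Prop
  | cyclotomic :
      Rel R n p d ε q Q
        (Polynomial.aeval (gen R n 0)
          (∏ t ∈ Finset.Icc 1 p, ∏ i : Fin d, (Polynomial.X - Polynomial.C (ε ^ t * Q i)))) 0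
  | quadratic (i : ℕ) (h1 : 1 ≤ i) (h2 : i ≤ n - 1) :
      Rel R n p d ε q Q
        ((gen R n i - algebraMap R (FreeAlgebra R (Fin n)) q) * (gen R n i + 1)) 0
  | braid0 :
      Rel R n p d ε q Q
        (gen R n 0 * gen R n 1 * gen R n 0 * gen R n 1)
        (gen R n 1 * gen R n 0 * gen R n 1 * gen R n 0)
  | braid (i : ℕ) (h1 : 1 ≤ i) (h2 : i ≤ n - 2) :
      Rel R n p d ε q Q
        (gen R n (i + 1) * gen R n i * gen R n (i + 1))
        (gen R n i * gen R n (i + 1) * gen R n i)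
  | comm (i j : ℕ) (h1 : i < j - 1) (h2 : j - 1 ≤ n - 2) :
      Rel R n p d ε q Q (gen R n i * gen R n j) (gen R n j * gen R n i)

/-- The Ariki–Koike algebra `H_{r,n}`, `r = p * d`: the quotient of the free `R`-algebra on the
`n` generators `T_0, …, T_{n-1}` by the two-sided ideal generated by the defining relations. -/
abbrev H (R : Type*) [CommRing R] (n p d : ℕ) (ε q : R) (Q : Fin d → R) :=
  RingQuot (Rel R n p d ε q Q)

/-- The images `T_i` of the generators in the Ariki–Koike algebra. -/
def T (R : Type*) [CommRing R] (n p d : ℕ) (ε q : R) (Q : Fin d → R) (i : ℕ) :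
    H R n p d ε q Q :=
  RingQuot.mkAlgHom R (Rel R n p d ε q Q) (gen R n i)

/-- The Jucys–Murphy elements: `L_1 = T_0` and `L_{k+1} = q⁻¹ T_k L_k T_k` for `1 ≤ k < n`. -/
def L (R : Type*) [CommRing R] (n p d : ℕ) (ε q : R) (Q : Fin d → R) : ℕ → H R n p d ε q Q
  | 0 => 1
  | 1 => T R n p d ε q Q 0
  | (k + 2) =>
      algebraMap R (H R n p d ε q Q) (Ring.inverse q) * T R n p d ε q Q (k + 1) *
        L R n p d ε q Q (k + 1) * T R n p d ε q Q (k + 1)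

/-- `ε ^ s` for an integer exponent `s`, read modulo `p`. -/
def epow (R : Type*) [CommRing R] (p : ℕ) (ε : R) (s : ℤ) : R := ε ^ (s % (p : ℤ)).toNat

/-- `L^{(s)}_k = ∏_{i=1}^{d} (L_k - ε^s Q_i)` (depending only on `s` mod `p`). -/
def Ls (R : Type*) [CommRing R] (n p d : ℕ) (ε q : R) (Q : Fin d → R) (s : ℤ) (k : ℕ) :
    H R n p d ε q Q :=
  Polynomial.aeval (L R n p d ε q Q k)
    (∏ i : Fin d, (Polynomial.X - Polynomial.C (epow R p ε s * Q i)))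

/-- `∏_{l ≤ k ≤ m} ∏_{lo ≤ s ≤ hi} L^{(s)}_k`, for a consecutive range `lo..hi` of
superscripts (read modulo `p`). -/
def LLg (R : Type*) [CommRing R] (n p d : ℕ) (ε q : R) (Q : Fin d → R)
    (lo hi : ℤ) (l m : ℕ) : H R n p d ε q Q :=
  ((List.range (m + 1 - l)).map fun (x : ℕ) =>
    ((List.range (hi + 1 - lo).toNat).map fun (y : ℕ) =>
      Ls R n p d ε q Q (lo + (y : ℤ)) (l + x)).prod).prod

/-- `L^{(t)}_{l,m} = ∏_{l ≤ k ≤ m} L^{(t)}_k`. -/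
def Lt (R : Type*) [CommRing R] (n p d : ℕ) (ε q : R) (Q : Fin d → R)
    (t : ℤ) (l m : ℕ) : H R n p d ε q Q :=
  LLg R n p d ε q Q t t l m

/-- `L^{(i,j)}_{l,m} = ∏_{l ≤ k ≤ m} ∏_{s ∈ I_{ij}} L^{(s)}_k` where `I_{ij} = {i, …, j}` if
`i ≤ j` and `I_{ij} = {1, …, j} ∪ {i, …, p}` if `i > j` (as sets of exponents modulo `p`,
`I_{ij}` is the consecutive range `i, i+1, …, j + p` when `i > j`). -/
def LL (R : Type*) [CommRing R] (n p d : ℕ) (ε q : R) (Q : Fin d → R)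
    (i j : ℕ) (l m : ℕ) : H R n p d ε q Q :=
  LLg R n p d ε q Q (i : ℤ) (if i ≤ j then (j : ℤ) else (j : ℤ) + (p : ℤ)) l m

/-- `T^{⟨k⟩}_{a,b} = (T_{a+b+k-1} T_{a+b+k-2} ⋯ T_{k+1})^b`, and `T_{a,b} = T^{⟨0⟩}_{a,b}`. -/
def Tw (R : Type*) [CommRing R] (n p d : ℕ) (ε q : R) (Q : Fin d → R)
    (k a b : ℕ) : H R n p d ε q Q :=
  (((List.range (a + b - 1)).map fun (j : ℕ) => T R n p d ε q Q (a + b + k - 1 - j)).prod) ^ b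

/-- Partial sums `b_i^j = b_i + b_{i+1} + ⋯ + b_j` (zero when `i > j`). -/
def Bsum (b : ℕ → ℕ) (i j : ℕ) : ℕ := ∑ t ∈ Finset.Icc i j, b t

/-- The element `v_b^{(t)}`; `v_b = v_b^{(0)}` is
`L^{(1,p-1)}_{1,b_p} T_{b_p,b_1^{p-1}} L^{(1,p-2)}_{1,b_{p-1}} T_{b_{p-1},b_1^{p-2}} ⋯
L^{(1,1)}_{1,b_2} T_{b_2,b_1^1} ⋅ L^{(2)}_{1,b_1^1} L^{(3)}_{1,b_1^2} ⋯ L^{(p)}_{1,b_1^{p-1}}`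
and `v_b^{(t)}` is obtained by shifting every superscript `s` to `s + t`. -/
def v (R : Type*) [CommRing R] (n p d : ℕ) (ε q : R) (Q : Fin d → R)
    (b : ℕ → ℕ) (t : ℤ) : H R n p d ε q Q :=
  (((List.range (p - 1)).map fun (x : ℕ) =>
      LLg R n p d ε q Q (1 + t) (((p - 1 - x : ℕ) : ℤ) + t) 1 (b (p - x)) *
        Tw R n p d ε q Q 0 (b (p - x)) (Bsum b 1 (p - 1 - x))).prod) *
  (((List.range (p - 1)).map fun (x : ℕ) =>
      Lt R n p d ε q Q ((x : ℤ) + 2 + t) 1 (Bsum b 1 (x + 1))).prod)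

/-- `Y_t = L^{(t+1, t+p-1)}_{1, b_t} T_{b_t, n - b_t}` (superscripts read modulo `p`). -/
def Y (R : Type*) [CommRing R] (n p d : ℕ) (ε q : R) (Q : Fin d → R)
    (b : ℕ → ℕ) (t : ℕ) : H R n p d ε q Q :=
  LLg R n p d ε q Q ((t : ℤ) + 1) ((t : ℤ) + (p : ℤ) - 1) 1 (b t) *
    Tw R n p d ε q Q 0 (b t) (n - b t)

/-- `T_b = T^{⟨b_1^{p-2}⟩}_{b_{p-1}, b_p^p} ⋯ T^{⟨b_1^1⟩}_{b_2, b_3^p} T_{b_1, b_2^p}`. -/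
def Tcomp (R : Type*) [CommRing R] (n p d : ℕ) (ε q : R) (Q : Fin d → R)
    (b : ℕ → ℕ) : H R n p d ε q Q :=
  ((List.range (p - 1)).map fun (x : ℕ) =>
    Tw R n p d ε q Q (Bsum b 1 (p - 2 - x)) (b (p - 1 - x)) (Bsum b (p - x) p)).prod

end AK


section Aux

variable {R : Type*} [CommRing R] {n p d : ℕ} {ε q : R} {Q : Fin d → R}

lemma AKcentral (r : R) (x y : AK.H R n p d ε q Q) :
    x * (algebraMap R (AK.H R n p d ε q Q) r * y)
      = algebraMap R (AK.H R n p d ε q Q) r * (x * y) := by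
  rw [← mul_assoc, ← Algebra.commutes, mul_assoc]

lemma epow_add_one (hp2 : 2 ≤ p) (h1 : ε ^ p = 1) (s : ℤ) :
    ε * AK.epow R p ε s = AK.epow R p ε (s + 1) := by
  unfold AK.epow
  have hp' : (0:ℤ) < p := by exact_mod_cast Nat.lt_of_lt_of_le Nat.zero_lt_two hp2
  have h0 : 0 ≤ s % p := Int.emod_nonneg s (by omega)
  have hlt : s % p < p := Int.emod_lt_of_pos s hp'
  have hone : (1:ℤ) % p = 1 := Int.emod_eq_of_lt (by omega) (by exact_mod_cast hp2)
  have hadd : (s + 1) % p = (s % p + 1) % p := by rw [Int.add_emod, hone]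
  by_cases hc : s % p = (p:ℤ) - 1
  · have h2 : (s + 1) % p = 0 := by rw [hadd, hc, sub_add_cancel, Int.emod_self]
    rw [h2, hc]
    have ht : ((p:ℤ) - 1).toNat = p - 1 := by omega
    rw [ht]
    simp only [Int.toNat_zero, pow_zero]
    rw [← pow_succ']
    rwa [show p - 1 + 1 = p by omega]
  · have h2 : (s + 1) % p = s % p + 1 := by
      rw [hadd]; exact Int.emod_eq_of_lt (by omega) (by omega)
    have ht : (s % p + 1).toNat = (s % p).toNat + 1 := by omega
    rw [h2, ht, pow_succ']

lemma pow_eq_epow (hp2 : 2 ≤ p) (h1 : ε ^ p = 1) (m : ℕ) :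
    ε ^ m = AK.epow R p ε (m : ℤ) := by
  induction m with
  | zero => simp [AK.epow]
  | succ m ih =>
    rw [pow_succ', ih, epow_add_one hp2 h1]
    norm_num

lemma epow_congr {s t : ℤ} (h : s % p = t % p) :
    AK.epow R p ε s = AK.epow R p ε t := by
  unfold AK.epow; rw [h]

lemma prod_pow_range (ε : R) (m : ℕ) (e : ℕ → ℕ) :
    ((List.range m).map fun x => ε ^ e x).prod = ε ^ ∑ x ∈ Finset.range m, e x := by
  induction m with
  | zero => simp
  | succ m ih =>
    rw [List.range_succ, Finset.sum_range_succ]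
    simp [ih, pow_add]

lemma sig_list (σ : AK.H R n p d ε q Q ≃ₐ[R] AK.H R n p d ε q Q)
    (m : ℕ) (f g : ℕ → AK.H R n p d ε q Q) (c : ℕ → R)
    (h : ∀ x < m, σ (f x) = algebraMap R (AK.H R n p d ε q Q) (c x) * g x) :
    σ (((List.range m).map f).prod) =
      algebraMap R (AK.H R n p d ε q Q) (((List.range m).map c).prod) *
        ((List.range m).map g).prod := by
  induction m with
  | zero => simp
  | succ m ih =>
    rw [List.range_succ]
    simp only [List.map_append, List.prod_append, List.map_cons, List.map_nil,
      List.prod_cons, List.prod_nil, mul_one]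
    rw [map_mul, ih (fun x hx => h x (by omega)), h m (by omega),
      mul_assoc, AKcentral, ← mul_assoc, ← map_mul]

lemma sigL (σ : AK.H R n p d ε q Q ≃ₐ[R] AK.H R n p d ε q Q)
    (hσ0 : σ (AK.T R n p d ε q Q 0) =
      algebraMap R (AK.H R n p d ε q Q) ε * AK.T R n p d ε q Q 0)
    (hσi : ∀ i : ℕ, 1 ≤ i → i ≤ n - 1 → σ (AK.T R n p d ε q Q i) = AK.T R n p d ε q Q i) :
    ∀ k : ℕ, 1 ≤ k → k ≤ n →
      σ (AK.L R n p d ε q Q k) =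
        algebraMap R (AK.H R n p d ε q Q) ε * AK.L R n p d ε q Q k := by
  intro k
  induction k with
  | zero => intro h; omega
  | succ k ih =>
    intro _ hk2
    cases k with
    | zero => exact hσ0
    | succ k =>
      have hT : σ (AK.T R n p d ε q Q (k+1)) = AK.T R n p d ε q Q (k+1) :=
        hσi (k+1) (by omega) (by omega)
      have hL := ih (by omega) (by omega)
      show σ (algebraMap R (AK.H R n p d ε q Q) (Ring.inverse q) * AK.T R n p d ε q Q (k + 1) *
        AK.L R n p d ε q Q (k + 1) * AK.T R n p d ε q Q (k + 1)) =
        algebraMap R (AK.H R n p d ε q Q) ε *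
        (algebraMap R (AK.H R n p d ε q Q) (Ring.inverse q) * AK.T R n p d ε q Q (k + 1) *
          AK.L R n p d ε q Q (k + 1) * AK.T R n p d ε q Q (k + 1))
      rw [map_mul, map_mul, map_mul, AlgEquiv.commutes, hT, hL]
      simp only [mul_assoc]
      rw [AKcentral, AKcentral]

lemma sigLs (hp2 : 2 ≤ p) (h1 : ε ^ p = 1)
    (σ : AK.H R n p d ε q Q ≃ₐ[R] AK.H R n p d ε q Q)
    (hσ0 : σ (AK.T R n p d ε q Q 0) =
      algebraMap R (AK.H R n p d ε q Q) ε * AK.T R n p d ε q Q 0)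
    (hσi : ∀ i : ℕ, 1 ≤ i → i ≤ n - 1 → σ (AK.T R n p d ε q Q i) = AK.T R n p d ε q Q i)
    (k : ℕ) (hk1 : 1 ≤ k) (hk2 : k ≤ n) (s : ℤ) :
    σ (AK.Ls R n p d ε q Q s k) =
      algebraMap R (AK.H R n p d ε q Q) (ε ^ d) * AK.Ls R n p d ε q Q (s - 1) k := by
  unfold AK.Ls
  have h0 : σ (Polynomial.aeval (AK.L R n p d ε q Q k)
      (∏ i : Fin d, (Polynomial.X - Polynomial.C (AK.epow R p ε s * Q i)))) =
      Polynomial.aeval (σ (AK.L R n p d ε q Q k))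
      (∏ i : Fin d, (Polynomial.X - Polynomial.C (AK.epow R p ε s * Q i))) :=
    (Polynomial.aeval_algHom_apply σ (AK.L R n p d ε q Q k) _).symm
  rw [h0, sigL σ hσ0 hσi k hk1 hk2]
  have hcomp : (∏ i : Fin d, (Polynomial.X - Polynomial.C (AK.epow R p ε s * Q i))).comp
      (Polynomial.C ε * Polynomial.X)
      = Polynomial.C (ε ^ d) *
        ∏ i : Fin d, (Polynomial.X - Polynomial.C (AK.epow R p ε (s-1) * Q i)) := by
    rw [Polynomial.prod_comp]
    have hfac : ∀ i : Fin d,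
        (Polynomial.X - Polynomial.C (AK.epow R p ε s * Q i)).comp
          (Polynomial.C ε * Polynomial.X)
        = Polynomial.C ε * (Polynomial.X - Polynomial.C (AK.epow R p ε (s-1) * Q i)) := by
      intro i
      rw [Polynomial.sub_comp, Polynomial.X_comp, Polynomial.C_comp, mul_sub,
        ← Polynomial.C_mul, ← mul_assoc, epow_add_one hp2 h1, sub_add_cancel]
    rw [Finset.prod_congr rfl fun i _ => hfac i, Finset.prod_mul_distrib, Finset.prod_const,
      Finset.card_univ, Fintype.card_fin, ← Polynomial.C_pow]
  have h2 : Polynomial.aeval (AK.L R n p d ε q Q k)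
      ((∏ i : Fin d, (Polynomial.X - Polynomial.C (AK.epow R p ε s * Q i))).comp
        (Polynomial.C ε * Polynomial.X))
      = Polynomial.aeval (algebraMap R (AK.H R n p d ε q Q) ε * AK.L R n p d ε q Q k)
        (∏ i : Fin d, (Polynomial.X - Polynomial.C (AK.epow R p ε s * Q i))) := by
    rw [Polynomial.aeval_comp, map_mul, Polynomial.aeval_C, Polynomial.aeval_X]
  rw [← h2, hcomp, map_mul, Polynomial.aeval_C]

lemma sigTw (σ : AK.H R n p d ε q Q ≃ₐ[R] AK.H R n p d ε q Q)
    (hσi : ∀ i : ℕ, 1 ≤ i → i ≤ n - 1 → σ (AK.T R n p d ε q Q i) = AK.T R n p d ε q Q i)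
    (a c : ℕ) (h : a + c ≤ n) :
    σ (AK.Tw R n p d ε q Q 0 a c) = AK.Tw R n p d ε q Q 0 a c := by
  unfold AK.Tw
  rw [map_pow]
  congr 1
  rw [map_list_prod σ, List.map_map]
  congr 1
  apply List.map_congr_left
  intro j hj
  rw [List.mem_range] at hj
  simp only [Function.comp]
  exact hσi (a + c + 0 - 1 - j) (by omega) (by omega)

lemma sigLLg (hp2 : 2 ≤ p) (h1 : ε ^ p = 1)
    (σ : AK.H R n p d ε q Q ≃ₐ[R] AK.H R n p d ε q Q)
    (hσ0 : σ (AK.T R n p d ε q Q 0) =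
      algebraMap R (AK.H R n p d ε q Q) ε * AK.T R n p d ε q Q 0)
    (hσi : ∀ i : ℕ, 1 ≤ i → i ≤ n - 1 → σ (AK.T R n p d ε q Q i) = AK.T R n p d ε q Q i)
    (lo hi : ℤ) (m : ℕ) (hm : m ≤ n) :
    σ (AK.LLg R n p d ε q Q lo hi 1 m) =
      algebraMap R (AK.H R n p d ε q Q) (ε ^ (m * d * (hi + 1 - lo).toNat)) *
        AK.LLg R n p d ε q Q (lo - 1) (hi - 1) 1 m := by
  unfold AK.LLg
  rw [show (hi - 1 + 1 - (lo - 1)) = (hi + 1 - lo) by ring]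
  simp only [Nat.add_sub_cancel]
  have hinner : ∀ x < m,
      σ (((List.range (hi + 1 - lo).toNat).map fun (y : ℕ) =>
          AK.Ls R n p d ε q Q (lo + (y : ℤ)) (1 + x)).prod) =
      algebraMap R (AK.H R n p d ε q Q) (ε ^ (d * (hi + 1 - lo).toNat)) *
        ((List.range (hi + 1 - lo).toNat).map fun (y : ℕ) =>
          AK.Ls R n p d ε q Q (lo - 1 + (y : ℤ)) (1 + x)).prod := by
    intro x hx
    have hpt : ∀ y < (hi + 1 - lo).toNat,
        σ (AK.Ls R n p d ε q Q (lo + (y : ℤ)) (1 + x)) =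
        algebraMap R (AK.H R n p d ε q Q) (ε ^ d) *
          AK.Ls R n p d ε q Q (lo - 1 + (y : ℤ)) (1 + x) := by
      intro y hy
      have := sigLs hp2 h1 σ hσ0 hσi (1 + x) (by omega) (by omega) (lo + (y : ℤ))
      rwa [show lo + (y : ℤ) - 1 = lo - 1 + (y : ℤ) by ring] at this
    have := sig_list σ ((hi + 1 - lo).toNat) _ _ _ hpt
    rw [this]
    congr 1
    rw [show ((List.range (hi + 1 - lo).toNat).map fun (_ : ℕ) => ε ^ d) =
      ((List.range (hi + 1 - lo).toNat).map fun (y : ℕ) => ε ^ (fun _ : ℕ => d) y) from rfl,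
      prod_pow_range, Finset.sum_const, smul_eq_mul, Finset.card_range]
    congr 1
    ring
  have := sig_list σ m _ _ _ hinner
  rw [this]
  congr 2
  rw [show ((List.range m).map fun (_ : ℕ) => ε ^ (d * (hi + 1 - lo).toNat)) =
    ((List.range m).map fun (x : ℕ) => ε ^ (fun _ : ℕ => d * (hi + 1 - lo).toNat) x) from rfl,
    prod_pow_range, Finset.sum_const, smul_eq_mul, Finset.card_range]
  congr 1
  ring

lemma comb_sum (p : ℕ) (hp : 2 ≤ p) (b : ℕ → ℕ) (d : ℕ) :
    ((∑ x ∈ Finset.range (p-1), b (p - x) * d * (p - 1 - x)) +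
     ∑ x ∈ Finset.range (p-1), AK.Bsum b 1 (x+1) * d * 1) =
    d * ((∑ t ∈ Finset.Icc 1 p, b t) * (p - 1)) := by
  have hS1 : (∑ x ∈ Finset.range (p-1), b (p - x) * d * (p - 1 - x))
      = ∑ j ∈ Finset.range (p-1), b (j+2) * d * (j+1) := by
    rw [← Finset.sum_range_reflect (fun j => b (j+2) * d * (j+1)) (p-1)]
    apply Finset.sum_congr rfl
    intro x hx
    rw [Finset.mem_range] at hx
    rw [show p - 1 - 1 - x + 2 = p - x by omega, show p - 1 - 1 - x + 1 = p - 1 - x by omega]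
  have hA : (∑ t ∈ Finset.Icc 1 p, b t * d * (t - 1))
      = ∑ j ∈ Finset.range (p-1), b (j+2) * d * (j+1) := by
    rw [← Finset.Ico_add_one_right_eq_Icc, Finset.sum_Ico_eq_sum_range,
      show p + 1 - 1 = (p - 1) + 1 by omega, Finset.sum_range_succ']
    rw [show b (1 + 0) * d * (1 + 0 - 1) = 0 by simp, add_zero]
    apply Finset.sum_congr rfl
    intro j _
    rw [show 1 + (j + 1) = j + 2 by omega, show j + 2 - 1 = j + 1 by omega]
  have hS2 : (∑ x ∈ Finset.range (p-1), AK.Bsum b 1 (x+1) * d * 1)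
      = ∑ t ∈ Finset.Icc 1 (p-1), b t * d * (p - t) := by
    simp only [mul_one]
    rw [show (∑ x ∈ Finset.range (p-1), AK.Bsum b 1 (x+1) * d)
        = (∑ x ∈ Finset.range (p-1), ∑ t ∈ Finset.Icc 1 (x+1), b t * d) from
      Finset.sum_congr rfl fun x _ => by rw [AK.Bsum, Finset.sum_mul]]
    rw [Finset.sum_comm' (t' := Finset.Icc 1 (p-1)) (s' := fun t => Finset.Icc (t-1) (p-2))
      (fun x y => by simp only [Finset.mem_range, Finset.mem_Icc]; omega)]
    apply Finset.sum_congr rfl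
    intro t ht
    rw [Finset.mem_Icc] at ht
    rw [Finset.sum_const, Nat.card_Icc, smul_eq_mul,
      show p - 2 + 1 - (t - 1) = p - t by omega]
    ring
  have hB : (∑ t ∈ Finset.Icc 1 (p-1), b t * d * (p - t))
      = ∑ t ∈ Finset.Icc 1 p, b t * d * (p - t) := by
    rw [show p = (p - 1) + 1 by omega, Finset.sum_Icc_succ_top (by omega)]
    rw [show ((p-1)+1 : ℕ) - ((p-1)+1) = 0 by omega, mul_zero, add_zero]
    apply Finset.sum_congr rfl
    intro t ht
    rw [show (p-1)+1 = p by omega]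
  rw [hS1, ← hA, hS2, hB, ← Finset.sum_add_distrib]
  rw [show (∑ t ∈ Finset.Icc 1 p, (b t * d * (t - 1) + b t * d * (p - t)))
      = ∑ t ∈ Finset.Icc 1 p, b t * (d * (p - 1)) from
    Finset.sum_congr rfl fun t ht => by
      rw [Finset.mem_Icc] at ht
      rw [mul_assoc, mul_assoc, ← Nat.mul_add, ← Nat.mul_add,
        show t - 1 + (p - t) = p - 1 by omega]]
  rw [← Finset.sum_mul]
  ring

end Aux

/-- Let `σ` be the unique `R`-algebra automorphism of `H` with
`σ(T_0) = ε T_0` and `σ(T_i) = T_i` for `1 <= i <= n-1`.  Then for `1 <= bb <= n` and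
`1 <= s <= t <= p` one has `σ(L^(s,t)_(1,bb)) = ε^(bb d (t-s+1)) L^(s-1,t-1)_(1,bb)`
(superscripts read modulo `p`).  Consequently, for any composition `b` of `n` into `p`
non-negative parts, `σ(v_b) = ε^(-n d) v_b^(-1)` and
`σ(Y_t) = ε^(-d b_t) L^(t,t+p-2)_(1,b_t) T_(b_t, n-b_t)` for `1 <= t <= p`. -/
theorem stmt_16 (R : Type*) [CommRing R] (n p d : ℕ) (hn : 3 ≤ n) (hp : 2 ≤ p) (hd : 1 ≤ d)
    (ε q : R) (Q : Fin d → R) (hε : IsPrimitiveRoot ε p)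
    (hq : IsUnit q) (hQ : ∀ i, IsUnit (Q i))
    (b : ℕ → ℕ) (hper : ∀ i, b (i + p) = b i) (hsum : AK.Bsum b 1 p = n)
    (σ : AK.H R n p d ε q Q ≃ₐ[R] AK.H R n p d ε q Q)
    (hσ0 : σ (AK.T R n p d ε q Q 0) = algebraMap R (AK.H R n p d ε q Q) ε * AK.T R n p d ε q Q 0)
    (hσi : ∀ i : ℕ, 1 ≤ i → i ≤ n - 1 → σ (AK.T R n p d ε q Q i) = AK.T R n p d ε q Q i) :
    (∀ bb s t : ℕ, 1 ≤ bb → bb ≤ n → 1 ≤ s → s ≤ t → t ≤ p →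
      σ (AK.LLg R n p d ε q Q (s : ℤ) (t : ℤ) 1 bb) =
        algebraMap R (AK.H R n p d ε q Q) (ε ^ (bb * d * (t - s + 1))) *
          AK.LLg R n p d ε q Q ((s : ℤ) - 1) ((t : ℤ) - 1) 1 bb) ∧
    σ (AK.v R n p d ε q Q b 0) =
      algebraMap R (AK.H R n p d ε q Q) (AK.epow R p ε (-((n : ℤ) * (d : ℤ)))) *
        AK.v R n p d ε q Q b (-1) ∧
    (∀ t : ℕ, 1 ≤ t → t ≤ p →
      σ (AK.Y R n p d ε q Q b t) =
        algebraMap R (AK.H R n p d ε q Q) (AK.epow R p ε (-((d : ℤ) * (b t : ℤ)))) *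
          (AK.LLg R n p d ε q Q (t : ℤ) ((t : ℤ) + (p : ℤ) - 2) 1 (b t) *
            AK.Tw R n p d ε q Q 0 (b t) (n - b t))) := by
  have h1 : ε ^ p = 1 := hε.pow_eq_one
  have hble : ∀ j, 1 ≤ j → j ≤ p → b j ≤ n := by
    intro j hj1 hj2
    rw [← hsum]
    exact Finset.single_le_sum (fun i _ => Nat.zero_le _) (Finset.mem_Icc.mpr ⟨hj1, hj2⟩)
  have hBle : ∀ j, j ≤ p → AK.Bsum b 1 j ≤ n := by
    intro j hj
    rw [← hsum]
    exact Finset.sum_le_sum_of_subset (Finset.Icc_subset_Icc_right hj)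
  refine ⟨?_, ?_, ?_⟩
  · intro bb s t hbb1 hbb2 hs1 hst htp
    have h := sigLLg hp h1 σ hσ0 hσi (s : ℤ) (t : ℤ) bb hbb2
    rwa [show ((t : ℤ) + 1 - (s : ℤ)).toNat = t - s + 1 by omega] at h
  · -- the v part
    have hpt1 : ∀ x < p - 1,
        σ (AK.LLg R n p d ε q Q (1 + 0) (((p - 1 - x : ℕ) : ℤ) + 0) 1 (b (p - x)) *
           AK.Tw R n p d ε q Q 0 (b (p - x)) (AK.Bsum b 1 (p - 1 - x))) =
        algebraMap R (AK.H R n p d ε q Q) (ε ^ (b (p - x) * d * (p - 1 - x))) *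
          (AK.LLg R n p d ε q Q (1 + (-1)) (((p - 1 - x : ℕ) : ℤ) + (-1)) 1 (b (p - x)) *
           AK.Tw R n p d ε q Q 0 (b (p - x)) (AK.Bsum b 1 (p - 1 - x))) := by
      intro x hx
      have hTw : b (p - x) + AK.Bsum b 1 (p - 1 - x) ≤ n := by
        have he : AK.Bsum b 1 ((p - 1 - x) + 1)
            = AK.Bsum b 1 (p - 1 - x) + b ((p - 1 - x) + 1) :=
          Finset.sum_Icc_succ_top (by omega) b
        have hb2 := hBle (p - x) (by omega)
        rw [show (p - 1 - x) + 1 = p - x by omega] at he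
        omega
      rw [map_mul, sigTw σ hσi _ _ hTw,
        sigLLg hp h1 σ hσ0 hσi (1 + 0) (((p - 1 - x : ℕ) : ℤ) + 0) (b (p - x))
          (hble (p - x) (by omega) (by omega)),
        mul_assoc,
        show (((p - 1 - x : ℕ) : ℤ) + 0 + 1 - (1 + 0)).toNat = p - 1 - x by omega,
        show (1 + 0 - 1 : ℤ) = 1 + (-1) by ring,
        show ((p - 1 - x : ℕ) : ℤ) + 0 - 1 = ((p - 1 - x : ℕ) : ℤ) + (-1) by ring]
    have hpt2 : ∀ x < p - 1,
        σ (AK.Lt R n p d ε q Q ((x : ℤ) + 2 + 0) 1 (AK.Bsum b 1 (x + 1))) =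
        algebraMap R (AK.H R n p d ε q Q) (ε ^ (AK.Bsum b 1 (x + 1) * d * 1)) *
          AK.Lt R n p d ε q Q ((x : ℤ) + 2 + (-1)) 1 (AK.Bsum b 1 (x + 1)) := by
      intro x hx
      unfold AK.Lt
      rw [sigLLg hp h1 σ hσ0 hσi ((x : ℤ) + 2 + 0) ((x : ℤ) + 2 + 0) (AK.Bsum b 1 (x + 1))
          (hBle (x + 1) (by omega)),
        show ((x : ℤ) + 2 + 0 + 1 - ((x : ℤ) + 2 + 0)).toNat = 1 by omega,
        show ((x : ℤ) + 2 + 0 - 1) = (x : ℤ) + 2 + (-1) by ring]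
    have e1 := sig_list σ (p - 1) _ _ _ hpt1
    have e2 := sig_list σ (p - 1) _ _ _ hpt2
    show σ ((((List.range (p - 1)).map fun (x : ℕ) =>
        AK.LLg R n p d ε q Q (1 + 0) (((p - 1 - x : ℕ) : ℤ) + 0) 1 (b (p - x)) *
          AK.Tw R n p d ε q Q 0 (b (p - x)) (AK.Bsum b 1 (p - 1 - x))).prod) *
        (((List.range (p - 1)).map fun (x : ℕ) =>
          AK.Lt R n p d ε q Q ((x : ℤ) + 2 + 0) 1 (AK.Bsum b 1 (x + 1))).prod))
      = algebraMap R (AK.H R n p d ε q Q) (AK.epow R p ε (-((n : ℤ) * (d : ℤ)))) *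
        ((((List.range (p - 1)).map fun (x : ℕ) =>
          AK.LLg R n p d ε q Q (1 + (-1)) (((p - 1 - x : ℕ) : ℤ) + (-1)) 1 (b (p - x)) *
            AK.Tw R n p d ε q Q 0 (b (p - x)) (AK.Bsum b 1 (p - 1 - x))).prod) *
         (((List.range (p - 1)).map fun (x : ℕ) =>
           AK.Lt R n p d ε q Q ((x : ℤ) + 2 + (-1)) 1 (AK.Bsum b 1 (x + 1))).prod))
    rw [map_mul, e1, e2, mul_assoc, AKcentral, ← mul_assoc, ← map_mul]
    congr 2
    rw [prod_pow_range ε (p - 1) (fun x => b (p - x) * d * (p - 1 - x)),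
      prod_pow_range ε (p - 1) (fun x => AK.Bsum b 1 (x + 1) * d * 1),
      ← pow_add, pow_eq_epow hp h1]
    apply epow_congr
    have hcomb := comb_sum p hp b d
    have hsum' : (∑ t ∈ Finset.Icc 1 p, b t) = n := hsum
    rw [hsum'] at hcomb
    rw [hcomb]
    have hc : ((p - 1 : ℕ) : ℤ) = (p : ℤ) - 1 := by omega
    show ((d * (n * (p - 1)) : ℕ) : ℤ) % (p : ℤ) = (-((n : ℤ) * (d : ℤ))) % (p : ℤ)
    have : ((d * (n * (p - 1)) : ℕ) : ℤ) ≡ -((n : ℤ) * (d : ℤ)) [ZMOD (p : ℤ)] := by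
      apply Int.modEq_iff_dvd.mpr
      refine ⟨-((n : ℤ) * (d : ℤ)), ?_⟩
      push_cast [hc]
      ring
    exact this
  · -- the Y part
    intro t ht1 ht2
    have hbt : b t ≤ n := hble t ht1 ht2
    show σ (AK.LLg R n p d ε q Q ((t : ℤ) + 1) ((t : ℤ) + (p : ℤ) - 1) 1 (b t) *
        AK.Tw R n p d ε q Q 0 (b t) (n - b t)) = _
    rw [map_mul, sigTw σ hσi (b t) (n - b t) (by omega),
      sigLLg hp h1 σ hσ0 hσi ((t : ℤ) + 1) ((t : ℤ) + (p : ℤ) - 1) (b t) hbt,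
      show ((t : ℤ) + 1 - 1) = (t : ℤ) by ring,
      show ((t : ℤ) + (p : ℤ) - 1 - 1) = (t : ℤ) + (p : ℤ) - 2 by ring,
      show ((t : ℤ) + (p : ℤ) - 1 + 1 - ((t : ℤ) + 1)).toNat = p - 1 by omega,
      mul_assoc]
    congr 2
    rw [pow_eq_epow hp h1]
    apply epow_congr
    have hc : ((p - 1 : ℕ) : ℤ) = (p : ℤ) - 1 := by omega
    show ((b t * d * (p - 1) : ℕ) : ℤ) % (p : ℤ) = (-((d : ℤ) * (b t : ℤ))) % (p : ℤ)
    have : ((b t * d * (p - 1) : ℕ) : ℤ) ≡ -((d : ℤ) * (b t : ℤ)) [ZMOD (p : ℤ)] := by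
      apply Int.modEq_iff_dvd.mpr
      refine ⟨-((b t : ℤ) * (d : ℤ)), ?_⟩
      push_cast [hc]
      ring
    exact this
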